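/- The maximum cardinality c'_{3,3} of a subset of [3]^3 containing no geometric line equals 16. -/

import Mathlib

/-- The cube `[3]^n = {1,2,3}^n`, viewed inside `ℤ^n`. -/
def cube (n : ℕ) : Finset (Fin n → ℤ) :=
  Fintype.piFinset fun _ => ({1, 2, 3} : Finset ℤ)

/-- A Moser set: a set containing no geometric line `{a, a+r, a+2r}` with `r ≠ 0`. -/
def MoserFree {n : ℕ} (A : Finset (Fin n → ℤ)) : Prop :=
  ¬ ∃ a r : Fin n → ℤ, r ≠ 0 ∧ a ∈ A ∧ a + r ∈ A ∧ a + r + r ∈ A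

namespace Moser33

abbrev Line := ℕ × ℕ × ℕ

def lines : List Line :=
  [(0, 1, 2), (0, 3, 6), (0, 4, 8), (0, 9, 18), (0, 10, 20), (0, 12, 24), (0, 13, 26),
   (1, 4, 7), (1, 10, 19), (1, 13, 25), (2, 4, 6), (2, 5, 8), (2, 10, 18), (2, 11, 20),
   (2, 13, 24), (2, 14, 26), (3, 4, 5), (3, 12, 21), (3, 13, 23), (4, 13, 22), (5, 13, 21),
   (5, 14, 23), (6, 7, 8), (6, 12, 18), (6, 13, 20), (6, 15, 24), (6, 16, 26), (7, 13, 19),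
   (7, 16, 25), (8, 13, 18), (8, 14, 20), (8, 16, 24), (8, 17, 26), (9, 10, 11), (9, 12, 15),
   (9, 13, 17), (10, 13, 16), (11, 13, 15), (11, 14, 17), (12, 13, 14), (15, 16, 17),
   (18, 19, 20), (18, 21, 24), (18, 22, 26), (19, 22, 25), (20, 22, 24), (20, 23, 26),
   (21, 22, 23), (24, 25, 26)]

def pts (l : Line) : List ℕ := [l.1, l.2.1, l.2.2]

def contained (l : Line) (m : List ℕ) : Bool :=
  decide (l.1 ∈ m) && decide (l.2.1 ∈ m) && decide (l.2.2 ∈ m)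

def disj2 (l l' : Line) : Bool := (pts l).all fun p => decide (p ∉ pts l')

def pdisj : List Line → Bool
  | [] => true
  | l :: ls => ls.all (disj2 l) && pdisj ls

def greedy : List Line → List ℕ → List Line
  | [], _ => []
  | l :: ls, used =>
    if (pts l).all (fun p => decide (p ∉ used)) then
      l :: greedy ls (pts l ++ used)
    else greedy ls used

def chk : ℕ → List ℕ → Bool
  | 0, _ => false
  | fuel+1, m =>
    (((greedy (lines.filter fun l => contained l m) []).all
        fun l => contained l m && decide (l ∈ lines)) &&
      pdisj (greedy (lines.filter fun l => contained l m) []) &&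
      decide (m.length ≤ 16 + (greedy (lines.filter fun l => contained l m) []).length))
    ||
    (match lines.filter (fun l => contained l m) with
      | [] => false
      | l :: _ =>
        decide (l ∈ lines) &&
        chk fuel (m.erase l.1) && chk fuel (m.erase l.2.1) && chk fuel (m.erase l.2.2))

/-- A set avoiding points of pairwise disjoint lines, each contained in `m`, loses
    at least one point per line. -/
lemma key (D : List Line) : ∀ (m : List ℕ) (S : Finset ℕ),
    (∀ x ∈ S, x ∈ m) →
    (∀ l ∈ D, (∀ p ∈ pts l, p ∈ m) ∧ ∃ p ∈ pts l, p ∉ S) →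
    pdisj D = true →
    S.card + D.length ≤ m.length := by
  induction D with
  | nil =>
    intro m S hsub _ _
    simpa using le_trans (Finset.card_le_card fun x hx => List.mem_toFinset.2 (hsub x hx))
      m.toFinset_card_le
  | cons l D ih =>
    intro m S hsub hD hdisj
    obtain ⟨hlm, p, hp, hpS⟩ := hD l List.mem_cons_self
    have hpm : p ∈ m := hlm p hp
    have hdisj' : pdisj (l :: D) = true := hdisj
    rw [pdisj, Bool.and_eq_true, List.all_eq_true] at hdisj'
    obtain ⟨hall, hpd⟩ := hdisj'
    have h1 : S.card + D.length ≤ (m.erase p).length := by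
      apply ih (m.erase p) S
      · intro x hx
        refine (List.mem_erase_of_ne ?_).2 (hsub x hx)
        rintro rfl; exact hpS hx
      · intro l' hl'
        obtain ⟨hl'm, hex⟩ := hD l' (List.mem_cons_of_mem l hl')
        refine ⟨fun q hq => ?_, hex⟩
        have hdq : disj2 l l' = true := hall l' hl'
        rw [disj2, List.all_eq_true] at hdq
        have hnp : p ∉ pts l' := of_decide_eq_true (hdq p hp)
        refine (List.mem_erase_of_ne ?_).2 (hl'm q hq)
        rintro rfl; exact hnp hq
      · exact hpd
    have h2 : (m.erase p).length = m.length - 1 := List.length_erase_of_mem hpm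
    have h3 : 1 ≤ m.length := List.length_pos_iff.2 (List.ne_nil_of_mem hpm)
    simp only [List.length_cons]
    omega

lemma chk_sound : ∀ (fuel : ℕ) (m : List ℕ) (S : Finset ℕ),
    chk fuel m = true →
    (∀ x ∈ S, x ∈ m) →
    (∀ l ∈ lines, ¬ (l.1 ∈ S ∧ l.2.1 ∈ S ∧ l.2.2 ∈ S)) →
    S.card ≤ 16 := by
  intro fuel
  induction fuel with
  | zero => intro m S h; simp [chk] at h
  | succ fuel ih =>
    intro m S h hsub hfree
    rw [chk, Bool.or_eq_true] at h
    rcases h with h | h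
    · -- prune case
      rw [Bool.and_eq_true, Bool.and_eq_true] at h
      obtain ⟨⟨hall, hpd⟩, hlen⟩ := h
      rw [List.all_eq_true] at hall
      have := key (greedy (lines.filter fun l => contained l m) []) m S hsub ?_ hpd
      · have hlen' := of_decide_eq_true hlen
        omega
      · intro l hl
        have h1 := hall l hl
        rw [Bool.and_eq_true] at h1
        obtain ⟨hc, hlin⟩ := h1
        rw [contained, Bool.and_eq_true, Bool.and_eq_true] at hc
        have hlin' := of_decide_eq_true hlin
        constructor
        · intro p hp
          simp only [pts, List.mem_cons, List.not_mem_nil, or_false] at hp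
          rcases hp with rfl | rfl | rfl
          · exact of_decide_eq_true hc.1.1
          · exact of_decide_eq_true hc.1.2
          · exact of_decide_eq_true hc.2
        · rcases Decidable.em (l.1 ∈ S) with h1 | h1
          · rcases Decidable.em (l.2.1 ∈ S) with h2 | h2
            · rcases Decidable.em (l.2.2 ∈ S) with h3 | h3
              · exact absurd ⟨h1, h2, h3⟩ (hfree l hlin')
              · exact ⟨l.2.2, by simp [pts], h3⟩
            · exact ⟨l.2.1, by simp [pts], h2⟩
          · exact ⟨l.1, by simp [pts], h1⟩
    · -- branch case
      rcases hC : lines.filter (fun l => contained l m) with _ | ⟨l, rest⟩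
      · rw [hC] at h; simp at h
      · rw [hC] at h
        rw [Bool.and_eq_true, Bool.and_eq_true, Bool.and_eq_true] at h
        obtain ⟨⟨⟨hlin, h1⟩, h2⟩, h3⟩ := h
        have hlin' := of_decide_eq_true hlin
        have hfl := hfree l hlin'
        have hsub' : ∀ (p : ℕ), p ∉ S → ∀ x ∈ S, x ∈ m.erase p := by
          intro p hp x hx
          refine (List.mem_erase_of_ne ?_).2 (hsub x hx)
          rintro rfl; exact hp hx
        by_cases hp1 : l.1 ∈ S
        · by_cases hp2 : l.2.1 ∈ S
          · have hp3 : l.2.2 ∉ S := fun hp3 => hfl ⟨hp1, hp2, hp3⟩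
            exact ih (m.erase l.2.2) S h3 (hsub' _ hp3) hfree
          · exact ih (m.erase l.2.1) S h2 (hsub' _ hp2) hfree
        · exact ih (m.erase l.1) S h1 (hsub' _ hp1) hfree

set_option maxHeartbeats 4000000 in
lemma chk_true : chk 27 (List.range 27) = true := by decide

lemma bound_indices (S : Finset ℕ) (hS : ∀ x ∈ S, x < 27)
    (hfree : ∀ l ∈ lines, ¬ (l.1 ∈ S ∧ l.2.1 ∈ S ∧ l.2.2 ∈ S)) :
    S.card ≤ 16 :=
  chk_sound 27 (List.range 27) S chk_true
    (fun x hx => List.mem_range.2 (hS x hx)) hfree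

def dec3 (n : ℕ) : Fin 3 → ℤ := ![(n % 3 : ℤ) + 1, ((n / 3) % 3 : ℤ) + 1, ((n / 9) % 3 : ℤ) + 1]

def idx3 (p : Fin 3 → ℤ) : ℕ := ((p 0 - 1) + 3 * (p 1 - 1) + 9 * (p 2 - 1)).toNat

lemma cube_facts : ∀ p ∈ cube 3, dec3 (idx3 p) = p ∧ idx3 p < 27 := by decide

lemma line_facts : ∀ l ∈ lines,
    dec3 l.1 ≠ dec3 l.2.1 ∧ dec3 l.1 + dec3 l.2.2 = dec3 l.2.1 + dec3 l.2.1 := by decide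

lemma upper (A : Finset (Fin 3 → ℤ)) (hA : A ⊆ cube 3) (hfree : MoserFree A) :
    A.card ≤ 16 := by
  set S : Finset ℕ := A.image idx3 with hSdef
  have hinj : ∀ p ∈ A, ∀ q ∈ A, idx3 p = idx3 q → p = q := by
    intro p hp q hq h
    have h1 := (cube_facts p (hA hp)).1
    have h2 := (cube_facts q (hA hq)).1
    rw [← h1, ← h2, h]
  have hcard : S.card = A.card := Finset.card_image_of_injOn hinj
  rw [← hcard]
  apply bound_indices
  · intro x hx
    obtain ⟨p, hp, rfl⟩ := Finset.mem_image.1 hx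
    exact (cube_facts p (hA hp)).2
  · rintro l hl ⟨h1, h2, h3⟩
    obtain ⟨p, hp, hpe⟩ := Finset.mem_image.1 h1
    obtain ⟨q, hq, hqe⟩ := Finset.mem_image.1 h2
    obtain ⟨s, hs, hse⟩ := Finset.mem_image.1 h3
    have hpd : p = dec3 l.1 := by rw [← hpe]; exact ((cube_facts p (hA hp)).1).symm
    have hqd : q = dec3 l.2.1 := by rw [← hqe]; exact ((cube_facts q (hA hq)).1).symm
    have hsd : s = dec3 l.2.2 := by rw [← hse]; exact ((cube_facts s (hA hs)).1).symm
    obtain ⟨hne, heq⟩ := line_facts l hl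
    have hpqs : p + s = q + q := by rw [hpd, hqd, hsd]; exact heq
    apply hfree
    refine ⟨p, q - p, ?_, hp, ?_, ?_⟩
    · rw [hpd, hqd]; exact sub_ne_zero.2 (Ne.symm hne)
    · simpa using hq
    · have : p + (q - p) + (q - p) = s := by linear_combination -hpqs
      rwa [this]

def wlist : List (Fin 3 → ℤ) :=
  [![2,1,1], ![2,1,3], ![2,3,1], ![2,3,3],
   ![1,2,1], ![1,2,3], ![3,2,1], ![3,2,3],
   ![1,1,2], ![1,3,2], ![3,1,2], ![3,3,2],
   ![1,1,1], ![1,3,3], ![3,1,3], ![3,3,1]]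

def W : Finset (Fin 3 → ℤ) := wlist.toFinset

lemma W_sub : W ⊆ cube 3 := by decide

lemma W_card : W.card = 16 := by decide

lemma W_prop : ∀ a ∈ W, ∀ b ∈ W, ∀ c ∈ W, a + c = b + b → a = b := by decide

lemma W_free : MoserFree W := by
  rintro ⟨a, r, hr, ha, hb, hc⟩
  have h := W_prop a ha (a + r) hb (a + r + r) hc (by ring)
  exact hr (add_eq_left.mp h.symm)

end Moser33

/-- `c'_{3,3} = 16`. -/
theorem moser_3_eq_sixteen :
    IsGreatest {m | ∃ A : Finset (Fin 3 → ℤ), A ⊆ cube 3 ∧ MoserFree A ∧ A.card = m}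
      16 := by
  constructor
  · exact ⟨Moser33.W, Moser33.W_sub, Moser33.W_free, Moser33.W_card⟩
  · rintro m ⟨A, hA, hfree, rfl⟩
    exact Moser33.upper A hA hfree
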